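/- Let $n$ be a normalizer of the diagonal $D(E)$ in $A_R(G_E)$ and $d \in D(E)$. Define $\alpha_n(x) = r(\operatorname{supp}(n)x)$ for $x \in s(\operatorname{supp}(n))$, extended so that $d \circ \alpha_n$ vanishes off $s(\operatorname{supp}(n))$. Then $n^* d = (d \circ \alpha_n) n^*$ and $n^* d n = (d \circ \alpha_n)(n^* n)$ in $A_R(G_E)$. -/

import Mathlib

open scoped Classical BigOperators

namespace LPA

structure DirGraph where
  V : Type
  E : Type
  r : E → V
  s : E → V

structure InfPath (G : DirGraph) where
  edges : ℕ → G.E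
  compat : ∀ i, G.s (edges i) = G.r (edges (i + 1))

structure FinPath (G : DirGraph) where
  len : ℕ
  vtx : G.V
  edges : ℕ → G.E
  compat : ∀ i, i + 1 < len → G.s (edges i) = G.r (edges (i + 1))
  vtx_eq : 0 < len → vtx = G.r (edges 0)

variable {G : DirGraph}

/-- The source vertex of a finite path (its `vtx` if it has length `0`). -/
def FinPath.src (μ : FinPath G) : G.V :=
  if μ.len = 0 then μ.vtx else G.s (μ.edges (μ.len - 1))

/-- The range vertex of an infinite path. -/
def InfPath.rng (x : InfPath G) : G.V := G.r (x.edges 0)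

/-- `x ∼ₖ y`: shift equivalence with lag `k`. -/
def ShiftEquiv (x : InfPath G) (k : ℤ) (y : InfPath G) : Prop :=
  ∃ a b N : ℕ, (a : ℤ) - (b : ℤ) = k ∧ ∀ i, N ≤ i → x.edges (i + a) = y.edges (i + b)

def RowFinite (G : DirGraph) : Prop := ∀ v : G.V, {e : G.E | G.r e = v}.Finite

def NoSources (G : DirGraph) : Prop := ∀ v : G.V, ∃ e : G.E, G.r e = v

/-- `x = μ z`: the infinite path `x` is the concatenation of the finite path `μ`
with the infinite path `z`. -/
def IsConcat (μ : FinPath G) (z x : InfPath G) : Prop :=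
  z.rng = μ.src ∧ ∀ i, x.edges i = if i < μ.len then μ.edges i else z.edges (i - μ.len)

/-- `ρ = μ β`: concatenation of finite paths. -/
def IsAppendF (μ β ρ : FinPath G) : Prop :=
  ρ.len = μ.len + β.len ∧ (∀ i < μ.len, ρ.edges i = μ.edges i) ∧
    (∀ i < β.len, ρ.edges (μ.len + i) = β.edges i) ∧
    ρ.vtx = if μ.len = 0 then β.vtx else μ.vtx

/-- Triples `(x, k, y)`: the ambient type of the graph groupoid. -/
abbrev GTrip (G : DirGraph) := InfPath G × ℤ × InfPath G

def gmul (g h : GTrip G) : GTrip G := (g.1, g.2.1 + h.2.1, h.2.2)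
def ginv (g : GTrip G) : GTrip G := (g.2.2, -g.2.1, g.1)
def unit (x : InfPath G) : GTrip G := (x, 0, x)

def GraphGroupoid (G : DirGraph) : Set (GTrip G) :=
  {g | ShiftEquiv g.1 g.2.1 g.2.2}

/-- `BC` for subsets of the groupoid. -/
def setMul (B C : Set (GTrip G)) : Set (GTrip G) :=
  {g | ∃ γ ∈ B, ∃ η ∈ C, γ.2.2 = η.1 ∧ g = gmul γ η}

def setInv (B : Set (GTrip G)) : Set (GTrip G) := ginv '' B

/-- The cylinder set `Z(μ)` of infinite paths extending `μ`. -/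
def Zset (μ : FinPath G) : Set (InfPath G) :=
  {x | (∀ i < μ.len, x.edges i = μ.edges i) ∧ x.rng = μ.vtx}

/-- The basic compact open bisection `Z(μ,ν) = {(μz, |μ|-|ν|, νz)}`. -/
def ZZ (μ ν : FinPath G) : Set (GTrip G) :=
  {g | ∃ z : InfPath G, IsConcat μ z g.1 ∧ IsConcat ν z g.2.2 ∧
    g.2.1 = (μ.len : ℤ) - (ν.len : ℤ)}

instance : TopologicalSpace (InfPath G) :=
  TopologicalSpace.generateFrom {S | ∃ μ : FinPath G, S = Zset μ}

def unitSet (S : Set (InfPath G)) : Set (GTrip G) := {g | ∃ x ∈ S, g = unit x}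

variable (R : Type) [CommRing R]

/-- The diagonal `D(E)` of the Steinberg algebra. -/
noncomputable def Diag (G : DirGraph) : Submodule R (GTrip G → R) :=
  Submodule.span R {f | ∃ μ : FinPath G, f = Set.indicator (unitSet (Zset μ)) 1}

/-- The Steinberg algebra `A_R(G_E)` as a set of functions on the groupoid. -/
noncomputable def Steinberg (G : DirGraph) : Submodule R (GTrip G → R) :=
  Submodule.span R
    {f | ∃ μ ν : FinPath G, μ.src = ν.src ∧ f = Set.indicator (ZZ μ ν) 1}

variable {R}

/-- Convolution product. -/
noncomputable def conv (f g : GTrip G → R) : GTrip G → R :=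
  fun γ => ∑ᶠ η ∈ {η : GTrip G | η.1 = γ.1}, f η * g (gmul (ginv η) γ)

/-- Involution `f^*(γ) = star (f (γ⁻¹))`. -/
def starf [StarRing R] (f : GTrip G → R) : GTrip G → R :=
  fun γ => star (f (ginv γ))

/-- `n` is a normalizer of the diagonal. -/
def IsNormalizer [StarRing R] (n : GTrip G → R) : Prop :=
  n ∈ Steinberg R G ∧ ∀ d ∈ Diag R G,
    conv (conv n d) (starf n) ∈ Diag R G ∧ conv (conv (starf n) d) n ∈ Diag R G

/-- `α_n(x) = r(supp(n) x)` (given by a choice; unique for normalizers). -/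
noncomputable def alphaFun (n : GTrip G → R) (x : InfPath G) : InfPath G :=
  if h : ∃ g : GTrip G, n g ≠ 0 ∧ g.2.2 = x then h.choose.1 else x

/-- `dom(n) = supp(n^* n)`, as a subset of the infinite path space. -/
noncomputable def domSet [StarRing R] (n : GTrip G → R) : Set (InfPath G) :=
  {x | conv (starf n) n (unit x) ≠ 0}

/-- `ran(n) = supp(n n^*)`, as a subset of the infinite path space. -/
noncomputable def ranSet [StarRing R] (n : GTrip G → R) : Set (InfPath G) :=
  {x | conv n (starf n) (unit x) ≠ 0}

/-- `d ∘ α_n`, viewed as a function on the groupoid vanishing off `s(supp n)`. -/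
noncomputable def dAlpha (d n : GTrip G → R) : GTrip G → R := fun g =>
  if (g.2.1 = 0 ∧ g.1 = g.2.2 ∧ ∃ h : GTrip G, n h ≠ 0 ∧ h.2.2 = g.2.2)
  then d (unit (alphaFun n g.2.2)) else 0

/-- `p_x`, the characteristic function of the unit `{x}`. -/
noncomputable def ppt (R : Type) [CommRing R] (x : InfPath G) : GTrip G → R :=
  Set.indicator {unit x} 1

/-- `f` is homogeneous of degree `k`. -/
def Homog (k : ℤ) (f : GTrip G → R) : Prop := ∀ g : GTrip G, f g ≠ 0 → g.2.1 = k

def IsCycle (η : FinPath G) : Prop :=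
  0 < η.len ∧ η.src = η.vtx ∧
    ∀ i j, 0 < i → i + 1 < η.len → 0 < j → j + 1 < η.len → i ≠ j →
      G.s (η.edges i) ≠ G.r (η.edges j)

def HasEntrance (η : FinPath G) : Prop :=
  ∃ (e : G.E) (i : ℕ), i < η.len ∧ G.r e = G.r (η.edges i) ∧ e ≠ η.edges i

/-- `z = η η η ⋯`. -/
def IsPeriodicOf (η : FinPath G) (z : InfPath G) : Prop :=
  ∀ i, z.edges i = η.edges (i % η.len)

end LPA

namespace LPA

variable {G : DirGraph} {R : Type} [CommRing R]

theorem InfPath.ext' {x y : InfPath G} (h : x.edges = y.edges) : x = y := by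
  cases x; cases y; cases h; rfl

theorem unit_inj {x y : InfPath G} (h : unit x = unit y) : x = y :=
  congrArg Prod.fst h

theorem gtrip_ext {g h : GTrip G} (h1 : g.1 = h.1) (h2 : g.2.1 = h.2.1)
    (h3 : g.2.2 = h.2.2) : g = h := by
  obtain ⟨a, b, c⟩ := g; obtain ⟨a', b', c'⟩ := h
  simp_all

theorem concat_z_unique {μ : FinPath G} {z w x : InfPath G}
    (hz : IsConcat μ z x) (hw : IsConcat μ w x) : z = w := by
  refine InfPath.ext' (funext fun j => ?_)
  have h1 := hz.2 (j + μ.len)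
  have h2 := hw.2 (j + μ.len)
  rw [if_neg (by omega)] at h1 h2
  simp only [Nat.add_sub_cancel] at h1 h2
  rw [← h1, ← h2]

theorem concat_x_unique {μ : FinPath G} {z x x' : InfPath G}
    (hz : IsConcat μ z x) (hz' : IsConcat μ z x') : x = x' := by
  refine InfPath.ext' (funext fun i => ?_)
  rw [hz.2 i, hz'.2 i]

theorem ZZ_subsingleton_fst {μ ν : FinPath G} {g h : GTrip G}
    (hg : g ∈ ZZ μ ν) (hh : h ∈ ZZ μ ν) (h1 : g.1 = h.1) : g = h := by
  obtain ⟨z, hz1, hz2, hz3⟩ := hg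
  obtain ⟨w, hw1, hw2, hw3⟩ := hh
  rw [h1] at hz1
  have hzw : z = w := concat_z_unique hz1 hw1
  subst hzw
  exact gtrip_ext h1 (hz3.trans hw3.symm) (concat_x_unique hz2 hw2)

theorem ZZ_subsingleton_snd {μ ν : FinPath G} {g h : GTrip G}
    (hg : g ∈ ZZ μ ν) (hh : h ∈ ZZ μ ν) (h2 : g.2.2 = h.2.2) : g = h := by
  obtain ⟨z, hz1, hz2, hz3⟩ := hg
  obtain ⟨w, hw1, hw2, hw3⟩ := hh
  rw [h2] at hz2
  have hzw : z = w := concat_z_unique hz2 hw2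
  subst hzw
  exact gtrip_ext (concat_x_unique hz1 hw1) (hz3.trans hw3.symm) h2

theorem diag_supp {d : GTrip G → R} (hd : d ∈ Diag R G) :
    ∀ g : GTrip G, d g ≠ 0 → g.2.1 = 0 ∧ g.1 = g.2.2 := by
  have hd' : d ∈ Submodule.span R
      {f : GTrip G → R | ∃ μ : FinPath G, f = Set.indicator (unitSet (Zset μ)) 1} := hd
  refine Submodule.span_induction
    (p := fun f _ => ∀ g : GTrip G, f g ≠ 0 → g.2.1 = 0 ∧ g.1 = g.2.2)
    ?_ ?_ ?_ ?_ hd'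
  · rintro f ⟨μ, rfl⟩ g hg
    have hmem : g ∈ unitSet (Zset μ) := by
      by_contra hmem
      exact hg (Set.indicator_of_notMem hmem 1)
    obtain ⟨x, -, rfl⟩ := hmem
    exact ⟨rfl, rfl⟩
  · intro g hg; exact absurd rfl hg
  · intro f1 f2 _ _ h1 h2 g hg
    by_cases hg1 : f1 g = 0
    · refine h2 g ?_
      intro h0
      exact hg (by show f1 g + f2 g = 0; rw [hg1, h0, add_zero])
    · exact h1 g hg1
  · intro r f _ h g hg
    refine h g fun h0 => hg ?_
    show r • f g = 0
    rw [h0, smul_zero]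

theorem steinberg_fin {n : GTrip G → R} (hn : n ∈ Steinberg R G) :
    (∀ y : InfPath G, {h : GTrip G | n h ≠ 0 ∧ h.1 = y}.Finite) ∧
      (∀ x : InfPath G, {h : GTrip G | n h ≠ 0 ∧ h.2.2 = x}.Finite) := by
  have hn' : n ∈ Submodule.span R
      {f : GTrip G → R | ∃ μ ν : FinPath G, μ.src = ν.src ∧
        f = Set.indicator (ZZ μ ν) 1} := hn
  refine Submodule.span_induction
    (p := fun f _ => (∀ y : InfPath G, {h : GTrip G | f h ≠ 0 ∧ h.1 = y}.Finite) ∧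
      (∀ x : InfPath G, {h : GTrip G | f h ≠ 0 ∧ h.2.2 = x}.Finite))
    ?_ ?_ ?_ ?_ hn'
  · rintro f ⟨μ, ν, -, rfl⟩
    constructor
    · intro y
      refine Set.Subsingleton.finite fun g hg h hh => ?_
      have hg' : g ∈ ZZ μ ν := by
        by_contra hc; exact hg.1 (Set.indicator_of_notMem hc 1)
      have hh' : h ∈ ZZ μ ν := by
        by_contra hc; exact hh.1 (Set.indicator_of_notMem hc 1)
      exact ZZ_subsingleton_fst hg' hh' (hg.2.trans hh.2.symm)
    · intro x
      refine Set.Subsingleton.finite fun g hg h hh => ?_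
      have hg' : g ∈ ZZ μ ν := by
        by_contra hc; exact hg.1 (Set.indicator_of_notMem hc 1)
      have hh' : h ∈ ZZ μ ν := by
        by_contra hc; exact hh.1 (Set.indicator_of_notMem hc 1)
      exact ZZ_subsingleton_snd hg' hh' (hg.2.trans hh.2.symm)
  · constructor <;> intro v <;>
      exact Set.finite_empty.subset fun g hg => absurd rfl hg.1
  · intro f1 f2 _ _ h1 h2
    constructor
    · intro y
      refine ((h1.1 y).union (h2.1 y)).subset ?_
      rintro g ⟨hg, hgy⟩
      by_cases hg1 : f1 g = 0
      · refine Or.inr ⟨?_, hgy⟩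
        intro h0
        exact hg (by show f1 g + f2 g = 0; rw [hg1, h0, add_zero])
      · exact Or.inl ⟨hg1, hgy⟩
    · intro x
      refine ((h1.2 x).union (h2.2 x)).subset ?_
      rintro g ⟨hg, hgx⟩
      by_cases hg1 : f1 g = 0
      · refine Or.inr ⟨?_, hgx⟩
        intro h0
        exact hg (by show f1 g + f2 g = 0; rw [hg1, h0, add_zero])
      · exact Or.inl ⟨hg1, hgx⟩
  · intro r f _ h
    constructor
    · intro y
      refine (h.1 y).subset ?_
      rintro g ⟨hg, hgy⟩
      refine ⟨fun h0 => hg ?_, hgy⟩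
      show r • f g = 0
      rw [h0, smul_zero]
    · intro x
      refine (h.2 x).subset ?_
      rintro g ⟨hg, hgx⟩
      refine ⟨fun h0 => hg ?_, hgx⟩
      show r • f g = 0
      rw [h0, smul_zero]

theorem finsum_mem_eq_single' {α : Type*} {s : Set α} {f : α → R} (a : α) (ha : a ∈ s)
    (h : ∀ x ∈ s, x ≠ a → f x = 0) : (∑ᶠ x ∈ s, f x) = f a := by
  rw [finsum_mem_def, finsum_eq_single _ a, Set.indicator_of_mem ha]
  intro x hx
  by_cases hxs : x ∈ s
  · rw [Set.indicator_of_mem hxs]; exact h x hxs hx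
  · exact Set.indicator_of_notMem hxs _

theorem conv_unit_right {f d : GTrip G → R}
    (hd : ∀ g : GTrip G, d g ≠ 0 → g.2.1 = 0 ∧ g.1 = g.2.2) (γ : GTrip G) :
    conv f d γ = f γ * d (unit γ.2.2) := by
  have hg : gmul (ginv γ) γ = unit γ.2.2 := gtrip_ext rfl (neg_add_cancel _) rfl
  have h1 : (∑ᶠ η ∈ {η : GTrip G | η.1 = γ.1}, f η * d (gmul (ginv η) γ))
      = f γ * d (gmul (ginv γ) γ) := by
    refine finsum_mem_eq_single' γ rfl fun η hη hne => ?_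
    rcases eq_or_ne (d (gmul (ginv η) γ)) 0 with h0 | h0
    · rw [h0, mul_zero]
    · obtain ⟨ha, hb⟩ := hd _ h0
      have ha' : -η.2.1 + γ.2.1 = 0 := ha
      have hb' : η.2.2 = γ.2.2 := hb
      exact absurd (gtrip_ext hη (by omega) hb') hne
  show (∑ᶠ η ∈ {η : GTrip G | η.1 = γ.1}, f η * d (gmul (ginv η) γ)) = f γ * d (unit γ.2.2)
  rw [h1, hg]

theorem conv_unit_left {u f : GTrip G → R}
    (hu : ∀ g : GTrip G, u g ≠ 0 → g.2.1 = 0 ∧ g.1 = g.2.2) (γ : GTrip G) :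
    conv u f γ = u (unit γ.1) * f γ := by
  have hg : gmul (ginv (unit γ.1)) γ = γ := gtrip_ext rfl (by show -0 + γ.2.1 = γ.2.1; omega) rfl
  have h1 : (∑ᶠ η ∈ {η : GTrip G | η.1 = γ.1}, u η * f (gmul (ginv η) γ))
      = u (unit γ.1) * f (gmul (ginv (unit γ.1)) γ) := by
    refine finsum_mem_eq_single' (unit γ.1) rfl fun η hη hne => ?_
    rcases eq_or_ne (u η) 0 with h0 | h0
    · rw [h0, zero_mul]
    · obtain ⟨ha, hb⟩ := hu _ h0
      exact absurd (gtrip_ext (g := η) (h := unit γ.1) hη ha (hb.symm.trans hη)) hne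
  show (∑ᶠ η ∈ {η : GTrip G | η.1 = γ.1}, u η * f (gmul (ginv η) γ)) = u (unit γ.1) * f γ
  rw [h1, hg]

theorem dAlpha_supp (d n : GTrip G → R) :
    ∀ g : GTrip G, dAlpha d n g ≠ 0 → g.2.1 = 0 ∧ g.1 = g.2.2 := by
  intro g hg
  unfold dAlpha at hg
  split_ifs at hg with h
  · exact ⟨h.1, h.2.1⟩
  · exact absurd rfl hg

theorem dAlpha_unit {d n : GTrip G → R} {x : InfPath G}
    (hex : ∃ h : GTrip G, n h ≠ 0 ∧ h.2.2 = x) :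
    dAlpha d n (unit x) = d (unit (alphaFun n x)) := by
  unfold dAlpha
  rw [if_pos ⟨rfl, rfl, hex⟩]
  rfl

theorem exists_cut {Zc : Set (InfPath G)} (hZc : Zc.Finite) (x : InfPath G) :
    ∃ L : ℕ, ∀ z ∈ Zc, (∀ i < L, z.edges i = x.edges i) → z = x := by
  classical
  refine ⟨hZc.toFinset.sup
    (fun z => if h : ∃ i, z.edges i ≠ x.edges i then h.choose + 1 else 0), ?_⟩
  intro z hz hzi
  by_contra hzx
  have hex : ∃ i, z.edges i ≠ x.edges i := by
    by_contra hno; push_neg at hno; exact hzx (InfPath.ext' (funext hno))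
  have hle : (if h : ∃ i, z.edges i ≠ x.edges i then h.choose + 1 else 0)
      ≤ hZc.toFinset.sup
        (fun z => if h : ∃ i, z.edges i ≠ x.edges i then h.choose + 1 else 0) :=
    Finset.le_sup (f := fun z => if h : ∃ i, z.edges i ≠ x.edges i then h.choose + 1 else 0)
      (hZc.mem_toFinset.mpr hz)
  rw [dif_pos hex] at hle
  exact hex.choose_spec (hzi _ (by omega))

theorem sum_formula [StarRing R] {n : GTrip G → R} {μ : FinPath G} {y y' x : InfPath G}
    (hx : x ∈ Zset μ)
    (hZ : ∀ z : InfPath G, (∃ h : GTrip G, n h ≠ 0 ∧ h.1 = y ∧ h.2.2 = z) →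
      z ∈ Zset μ → z = x) (m : ℤ) :
    conv (conv n (Set.indicator (unitSet (Zset μ)) 1)) (starf n) ((y, m, y') : GTrip G)
      = ∑ᶠ k : ℤ, n ((y, k, x) : GTrip G) * star (n ((y', k - m, x) : GTrip G)) := by
  classical
  set D : GTrip G → R := Set.indicator (unitSet (Zset μ)) 1 with hD
  have hdD : D ∈ Diag R G := hD ▸ Submodule.subset_span ⟨μ, rfl⟩
  have hdsupp := diag_supp hdD
  have step1 : conv (conv n D) (starf n) ((y, m, y') : GTrip G)
      = ∑ᶠ η ∈ {η : GTrip G | η.1 = y},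
          n η * D (unit η.2.2) * star (n ((y', -(-η.2.1 + m), η.2.2) : GTrip G)) := by
    show (∑ᶠ η ∈ {η : GTrip G | η.1 = ((y, m, y') : GTrip G).1},
        conv n D η * starf n (gmul (ginv η) ((y, m, y') : GTrip G))) = _
    exact finsum_mem_congr rfl fun η _ => by rw [conv_unit_right hdsupp]; rfl
  rw [step1]
  have hkey : ∀ η ∈ Function.support (fun η : GTrip G =>
        n η * D (unit η.2.2) * star (n ((y', -(-η.2.1 + m), η.2.2) : GTrip G))),
      η ∈ {η : GTrip G | η.1 = y} ↔
        η ∈ Set.range (fun k : ℤ => ((y, k, x) : GTrip G)) := by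
    intro η hη
    constructor
    · intro hy
      have hn1 : n η ≠ 0 := left_ne_zero_of_mul (left_ne_zero_of_mul hη)
      have hn2 : D (unit η.2.2) ≠ 0 := right_ne_zero_of_mul (left_ne_zero_of_mul hη)
      have hzZ : η.2.2 ∈ Zset μ := by
        have hmem : unit η.2.2 ∈ unitSet (Zset μ) := by
          by_contra hcon
          exact hn2 (by rw [hD]; exact Set.indicator_of_notMem hcon 1)
        obtain ⟨w, hw, hwe⟩ := hmem
        rw [unit_inj hwe]; exact hw
      exact Set.mem_range.mpr ⟨η.2.1, gtrip_ext (g := (y, η.2.1, x)) (h := η) hy.symm rfl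
        (hZ η.2.2 ⟨η, hn1, hy, rfl⟩ hzZ).symm⟩
    · rintro ⟨k, rfl⟩; rfl
  rw [finsum_mem_inter_support_eq' _ _ _ hkey,
    ← finsum_mem_univ (fun k : ℤ => n ((y, k, x) : GTrip G) *
      star (n ((y', k - m, x) : GTrip G)))]
  refine (finsum_mem_eq_of_bijOn _
    ⟨fun k _ => Set.mem_range_self k,
     fun a _ b _ hab => congrArg (fun p : GTrip G => p.2.1) hab, ?_⟩ ?_).symm
  · rintro η ⟨k, rfl⟩; exact ⟨k, Set.mem_univ k, rfl⟩
  · intro k _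
    have hux : unit x ∈ unitSet (Zset μ) := ⟨x, hx, rfl⟩
    have h1 : D (unit x) = 1 := by
      rw [hD, Set.indicator_of_mem hux]; rfl
    have h2 : (-(-k + m) : ℤ) = k - m := by ring
    show n ((y, k, x) : GTrip G) * star (n ((y', k - m, x) : GTrip G))
        = n ((y, k, x) : GTrip G) * D (unit x) * star (n ((y', -(-k + m), x) : GTrip G))
    rw [h1, h2, mul_one]

theorem range_unique [IsDomain R] [StarRing R] {n : GTrip G → R} (hn : IsNormalizer n)
    {g g' : GTrip G} (hg : n g ≠ 0) (hg' : n g' ≠ 0) (hss : g.2.2 = g'.2.2) :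
    g.1 = g'.1 := by
  classical
  obtain ⟨y, kg, x⟩ := g
  obtain ⟨y', kg', x'⟩ := g'
  have hxx : x = x' := hss
  subst hxx
  show y = y'
  by_contra hyy
  have hFy := (steinberg_fin hn.1).1 y
  have hFy' := (steinberg_fin hn.1).1 y'
  have hbfin : (Function.support fun k : ℤ => n ((y, k, x) : GTrip G)).Finite := by
    refine Set.Finite.subset (Set.Finite.preimage
      (f := fun k : ℤ => ((y, k, x) : GTrip G)) ?_ hFy) (fun k hk => ?_)
    · exact Function.Injective.injOn
        (fun a b hab => congrArg (fun p : GTrip G => p.2.1) hab)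
    · exact ⟨hk, rfl⟩
  have hcfin : (Function.support fun k : ℤ => n ((y', k, x) : GTrip G)).Finite := by
    refine Set.Finite.subset (Set.Finite.preimage
      (f := fun k : ℤ => ((y', k, x) : GTrip G)) ?_ hFy') (fun k hk => ?_)
    · exact Function.Injective.injOn
        (fun a b hab => congrArg (fun p : GTrip G => p.2.1) hab)
    · exact ⟨hk, rfl⟩
  have hbne : hbfin.toFinset.Nonempty := ⟨kg, hbfin.mem_toFinset.mpr hg⟩
  have hcne : hcfin.toFinset.Nonempty := ⟨kg', hcfin.mem_toFinset.mpr hg'⟩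
  obtain ⟨L, hL⟩ := exists_cut (hFy.image (fun h : GTrip G => h.2.2)) x
  have hxZ : x ∈ Zset (⟨L, x.rng, x.edges, fun i _ => x.compat i, fun _ => rfl⟩ : FinPath G) :=
    ⟨fun i _ => rfl, rfl⟩
  have hZ : ∀ z : InfPath G, (∃ h : GTrip G, n h ≠ 0 ∧ h.1 = y ∧ h.2.2 = z) →
      z ∈ Zset (⟨L, x.rng, x.edges, fun i _ => x.compat i, fun _ => rfl⟩ : FinPath G) →
      z = x := by
    rintro z ⟨h, h1, h2, h3⟩ hzZ
    exact hL z ⟨h, ⟨h1, h2⟩, h3⟩ fun i hi => hzZ.1 i hi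
  have hE0 : conv (conv n (Set.indicator (unitSet (Zset
      (⟨L, x.rng, x.edges, fun i _ => x.compat i, fun _ => rfl⟩ : FinPath G))) 1))
      (starf n) ((y, hbfin.toFinset.max' hbne - hcfin.toFinset.min' hcne, y') : GTrip G)
      = 0 := by
    by_contra hne
    exact hyy ((diag_supp (hn.2 _ (Submodule.subset_span ⟨_, rfl⟩)).1 _ hne).2)
  rw [sum_formula hxZ hZ (hbfin.toFinset.max' hbne - hcfin.toFinset.min' hcne)] at hE0
  have hside : ∀ k : ℤ, k ≠ hbfin.toFinset.max' hbne →
      n ((y, k, x) : GTrip G) * star (n ((y', k -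
        (hbfin.toFinset.max' hbne - hcfin.toFinset.min' hcne), x) : GTrip G)) = 0 := by
    intro k hk
    by_cases hbk : n ((y, k, x) : GTrip G) = 0
    · rw [hbk, zero_mul]
    · have hkle : k ≤ hbfin.toFinset.max' hbne :=
        Finset.le_max' _ _ (hbfin.mem_toFinset.mpr hbk)
      have hcz : n ((y', k - (hbfin.toFinset.max' hbne - hcfin.toFinset.min' hcne), x)
          : GTrip G) = 0 := by
        by_contra hcz
        have hmle := Finset.min'_le _ _ (hcfin.mem_toFinset.mpr hcz)
        omega
      rw [hcz, star_zero, mul_zero]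
  rw [finsum_eq_single _ _ hside] at hE0
  have h5 : hbfin.toFinset.max' hbne -
      (hbfin.toFinset.max' hbne - hcfin.toFinset.min' hcne) = hcfin.toFinset.min' hcne := by
    ring
  rw [h5] at hE0
  have hb0 : n ((y, hbfin.toFinset.max' hbne, x) : GTrip G) ≠ 0 :=
    hbfin.mem_toFinset.mp (hbfin.toFinset.max'_mem hbne)
  have hc0 : n ((y', hcfin.toFinset.min' hcne, x) : GTrip G) ≠ 0 :=
    hcfin.mem_toFinset.mp (hcfin.toFinset.min'_mem hcne)
  exact mul_ne_zero hb0 (fun hs => hc0 (star_eq_zero.mp hs)) hE0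

theorem alphaFun_eq [IsDomain R] [StarRing R] {n : GTrip G → R} (hn : IsNormalizer n)
    {h : GTrip G} (hh : n h ≠ 0) : alphaFun n h.2.2 = h.1 := by
  unfold alphaFun
  have hex : ∃ g : GTrip G, n g ≠ 0 ∧ g.2.2 = h.2.2 := ⟨h, hh, rfl⟩
  rw [dif_pos hex]
  exact range_unique hn hex.choose_spec.1 hh hex.choose_spec.2

end LPA

open LPA in
/-- `n^* d = (d ∘ α_n) n^*` and `n^* d n = (d ∘ α_n)(n^* n)`. -/
theorem star_mul_diag {G : DirGraph} (hrf : RowFinite G) (hns : NoSources G)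
    {R : Type} [CommRing R] [IsDomain R] [StarRing R]
    (n : GTrip G → R) (hn : IsNormalizer n) (d : GTrip G → R) (hd : d ∈ Diag R G) :
    conv (starf n) d = conv (dAlpha d n) (starf n) ∧
      conv (conv (starf n) d) n = conv (dAlpha d n) (conv (starf n) n) := by
  classical
  have hds := diag_supp hd
  have hda := dAlpha_supp d n
  have part1 : conv (starf n) d = conv (dAlpha d n) (starf n) := by
    funext γ
    rw [conv_unit_right hds γ, conv_unit_left hda γ]
    by_cases h0 : n (ginv γ) = 0
    · have hs0 : starf n γ = 0 := by unfold starf; rw [h0, star_zero]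
      rw [hs0, zero_mul, mul_zero]
    · have h5 : alphaFun n γ.1 = γ.2.2 := alphaFun_eq hn h0
      have hAl : dAlpha d n (unit γ.1) = d (unit γ.2.2) := by
        rw [dAlpha_unit (x := γ.1) ⟨ginv γ, h0, rfl⟩, h5]
      rw [hAl]
      ring
  have part2 : conv (conv (starf n) d) n = conv (dAlpha d n) (conv (starf n) n) := by
    funext γ
    rw [conv_unit_left hda γ]
    have hfin : (Function.support (Set.indicator {η : GTrip G | η.1 = γ.1}
        fun η => starf n η * n (gmul (ginv η) γ))).Finite := by
      refine Set.Finite.subset (((steinberg_fin hn.1).2 γ.1).image ginv) ?_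
      intro η hη
      have hηs : η ∈ {η : GTrip G | η.1 = γ.1} := by
        by_contra hc; exact hη (Set.indicator_of_notMem hc _)
      have hne : starf n η * n (gmul (ginv η) γ) ≠ 0 := by
        have hη' := hη
        rw [Function.mem_support, Set.indicator_of_mem hηs] at hη'
        exact hη'
      have h0 : n (ginv η) ≠ 0 := by
        intro hz
        exact left_ne_zero_of_mul hne (by show star (n (ginv η)) = 0; rw [hz, star_zero])
      exact ⟨ginv η, ⟨h0, hηs⟩, gtrip_ext rfl (neg_neg _) rfl⟩
    have hstep : (∑ᶠ η ∈ {η : GTrip G | η.1 = γ.1},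
          conv (starf n) d η * n (gmul (ginv η) γ))
        = ∑ᶠ η ∈ {η : GTrip G | η.1 = γ.1},
          starf n η * d (unit η.2.2) * n (gmul (ginv η) γ) :=
      finsum_mem_congr rfl fun η _ => by rw [conv_unit_right hds]
    show (∑ᶠ η ∈ {η : GTrip G | η.1 = γ.1}, conv (starf n) d η * n (gmul (ginv η) γ))
        = dAlpha d n (unit γ.1) *
          ∑ᶠ η ∈ {η : GTrip G | η.1 = γ.1}, starf n η * n (gmul (ginv η) γ)
    rw [hstep, finsum_mem_def, finsum_mem_def, mul_finsum _ _]
    refine finsum_congr fun η => ?_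
    by_cases hηS : η ∈ {η : GTrip G | η.1 = γ.1}
    · rw [Set.indicator_of_mem hηS, Set.indicator_of_mem hηS]
      by_cases h0 : n (ginv η) = 0
      · have hs0 : starf n η = 0 := by unfold starf; rw [h0, star_zero]
        rw [hs0]; ring
      · have hη1 : η.1 = γ.1 := hηS
        have h5 : alphaFun n γ.1 = η.2.2 := by
          rw [← hη1]; exact alphaFun_eq hn h0
        have hAl : dAlpha d n (unit γ.1) = d (unit η.2.2) := by
          rw [dAlpha_unit (x := γ.1) ⟨ginv η, h0, hη1⟩, h5]
        rw [hAl]; ring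
    · rw [Set.indicator_of_notMem hηS, Set.indicator_of_notMem hηS, mul_zero]
  exact ⟨part1, part2⟩
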